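/- Let d ∈ ℝ and k_q, k_e > 0. For θ ∈ ℝ let C̄(θ) denote the 3×2 real matrix whose first row is (0, 1), second row is (cos θ, −d sin θ), and third row is (sin θ, d cos θ). Suppose θ : [0,∞) → ℝ is continuous, and q̃ : [0,∞) → ℝ² and ẽ : [0,∞) → ℝ³ are differentiable functions satisfying, for all t ≥ 0, q̃′(t) = −k_q · q̃(t) − C̄(θ(t))ᵀ ẽ(t) and ẽ′(t) = C̄(θ(t)) q̃(t) − k_e · (0, ẽ₂(t), ẽ₃(t)). Then ẽ(t) → 0 and q̃(t) → 0 as t → ∞. -/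

import Mathlib

open Matrix Filter Real

/-- The 3×2 kinematic matrix `C̄(θ)` of the DDWMR, with rows
`(0, 1)`, `(cos θ, −d sin θ)`, `(sin θ, d cos θ)`. -/
noncomputable def Cbar (d θ : ℝ) : Matrix (Fin 3) (Fin 2) ℝ :=
  !![0, 1; Real.cos θ, -d * Real.sin θ; Real.sin θ, d * Real.cos θ]

/-- Bound for the cross term `2 ε a b` when `0 ≤ ε ≤ 1`. -/
lemma ddwmr_cross_bound (ε a b : ℝ) (hε0 : 0 ≤ ε) (hε1 : ε ≤ 1) :
    -(a^2+b^2) ≤ 2*(ε*(a*b)) ∧ 2*(ε*(a*b)) ≤ a^2+b^2 := by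
  rcases le_or_gt 0 (a*b) with h | h
  · have h2 : ε*(a*b) ≤ 1*(a*b) := mul_le_mul_of_nonneg_right hε1 h
    constructor
    · nlinarith [mul_nonneg hε0 h]
    · nlinarith [sq_nonneg (a-b)]
  · have h2 : 1*(a*b) ≤ ε*(a*b) := mul_le_mul_of_nonpos_right hε1 h.le
    have h3 : ε*(a*b) ≤ 0 := mul_nonpos_of_nonneg_of_nonpos hε0 h.le
    constructor
    · nlinarith [sq_nonneg (a+b)]
    · nlinarith [sq_nonneg a, sq_nonneg b]

/-- Core algebraic inequality: the derivative of the strict Lyapunov function is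
bounded by a negative multiple of the function itself. -/
lemma ddwmr_key_alg (kq ke d ε μ s c a0 a1 b0 b1 b2 : ℝ)
    (hkq : 0 < kq) (hke : 0 < ke) (hε0 : 0 < ε) (hε1 : ε ≤ 1)
    (h1 : ε*(1+kq^2) ≤ kq) (h2 : ε*d^2 ≤ ke)
    (hμkq : μ ≤ kq) (hμke : μ ≤ ke) (hμε : μ ≤ ε/4) (hμ0 : 0 < μ)
    (hsc : s^2 + c^2 = 1) :
    2*a0*(-kq*a0 - (c*b1 + s*b2)) + 2*a1*(-kq*a1 - (b0 + -(d*s)*b1 + d*c*b2))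
      + 2*b0*a1 + 2*b1*(c*a0 + -(d*s)*a1 - ke*b1) + 2*b2*(s*a0 + d*c*a1 - ke*b2)
      + ε*((-kq*a1 - (b0 + -(d*s)*b1 + d*c*b2))*b0 + a1*a1)
      ≤ -(2*μ/3) * (a0^2+a1^2+b0^2+b1^2+b2^2 + ε*(a1*b0)) := by
  have hs1 : s^2 ≤ 1 := by nlinarith [sq_nonneg c]
  have hc1 : c^2 ≤ 1 := by nlinarith [sq_nonneg s]
  have e1 : -(kq*a1*b0) ≤ kq^2*a1^2 + b0^2/4 := by nlinarith [sq_nonneg (kq*a1 + b0/2)]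
  have hs2 : d^2*b1^2*s^2 ≤ d^2*b1^2 := by
    have := mul_le_mul_of_nonneg_left hs1 (by positivity : (0:ℝ) ≤ d^2*b1^2)
    linarith
  have hc2 : d^2*b2^2*c^2 ≤ d^2*b2^2 := by
    have := mul_le_mul_of_nonneg_left hc1 (by positivity : (0:ℝ) ≤ d^2*b2^2)
    linarith
  have e2 : d*s*b1*b0 ≤ d^2*b1^2 + b0^2/4 := by
    nlinarith [sq_nonneg (d*s*b1 - b0/2)]
  have e3 : -(d*c*b2*b0) ≤ d^2*b2^2 + b0^2/4 := by
    nlinarith [sq_nonneg (d*c*b2 + b0/2)]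
  have e1' := mul_le_mul_of_nonneg_left e1 hε0.le
  have e2' := mul_le_mul_of_nonneg_left e2 hε0.le
  have e3' := mul_le_mul_of_nonneg_left e3 hε0.le
  have q1 := mul_le_mul_of_nonneg_right h1 (sq_nonneg a1)
  have q2 := mul_le_mul_of_nonneg_right h2 (sq_nonneg b1)
  have q3 := mul_le_mul_of_nonneg_right h2 (sq_nonneg b2)
  have eA : 2*a0*(-kq*a0 - (c*b1 + s*b2)) + 2*a1*(-kq*a1 - (b0 + -(d*s)*b1 + d*c*b2))
      + 2*b0*a1 + 2*b1*(c*a0 + -(d*s)*a1 - ke*b1) + 2*b2*(s*a0 + d*c*a1 - ke*b2)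
      + ε*((-kq*a1 - (b0 + -(d*s)*b1 + d*c*b2))*b0 + a1*a1)
      ≤ -(kq*a0^2) - kq*a1^2 - ke*b1^2 - ke*b2^2 - (ε/4)*b0^2 := by
    have hring : 2*a0*(-kq*a0 - (c*b1 + s*b2)) + 2*a1*(-kq*a1 - (b0 + -(d*s)*b1 + d*c*b2))
      + 2*b0*a1 + 2*b1*(c*a0 + -(d*s)*a1 - ke*b1) + 2*b2*(s*a0 + d*c*a1 - ke*b2)
      + ε*((-kq*a1 - (b0 + -(d*s)*b1 + d*c*b2))*b0 + a1*a1)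
      = -(2*kq)*a0^2 - (2*kq)*a1^2 - (2*ke)*b1^2 - (2*ke)*b2^2 - ε*b0^2 + ε*a1^2
        + ε*(-(kq*a1*b0)) + ε*(d*s*b1*b0) + ε*(-(d*c*b2*b0)) := by ring
    rw [hring]
    linarith [e1', e2', e3', q1, q2, q3, mul_nonneg hkq.le (sq_nonneg a0)]
  have hB := (ddwmr_cross_bound ε a1 b0 hε0.le hε1).2
  have hB' := mul_le_mul_of_nonneg_left hB hμ0.le
  have p0 := mul_le_mul_of_nonneg_right hμkq (sq_nonneg a0)
  have p1 := mul_le_mul_of_nonneg_right hμkq (sq_nonneg a1)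
  have p2 := mul_le_mul_of_nonneg_right hμε (sq_nonneg b0)
  have p3 := mul_le_mul_of_nonneg_right hμke (sq_nonneg b1)
  have p4 := mul_le_mul_of_nonneg_right hμke (sq_nonneg b2)
  have n0 := mul_nonneg hμ0.le (sq_nonneg a0)
  have n1 := mul_nonneg hμ0.le (sq_nonneg b1)
  have n2 := mul_nonneg hμ0.le (sq_nonneg b2)
  linarith [eA, hB', p0, p1, p2, p3, p4, n0, n1, n2]

/-- A function whose square decays exponentially tends to zero. -/
lemma ddwmr_tendsto_of_sq_le_exp (f : ℝ → ℝ) (K lam : ℝ) (hlam : 0 < lam)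
    (hb : ∀ t, (0:ℝ) ≤ t → (f t)^2 ≤ K * Real.exp (-(lam*t))) :
    Tendsto f atTop (nhds 0) := by
  have h1 : Tendsto (fun t : ℝ => -(lam*t)) atTop atBot := by
    apply tendsto_neg_atBot_iff.mpr
    exact Tendsto.const_mul_atTop hlam tendsto_id
  have h0 : Tendsto (fun t => K * Real.exp (-(lam*t))) atTop (nhds 0) := by
    simpa using (Real.tendsto_exp_atBot.comp h1).const_mul K
  have hsq : Tendsto (fun t => (f t)^2) atTop (nhds 0) :=
    tendsto_of_tendsto_of_tendsto_of_le_of_le' tendsto_const_nhds h0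
      (Eventually.of_forall fun t => sq_nonneg _) ((eventually_ge_atTop 0).mono hb)
  have habs : Tendsto (fun t => |f t|) atTop (nhds 0) := by
    have := (Real.continuous_sqrt.tendsto 0).comp hsq
    simpa [Function.comp_def, Real.sqrt_sq_eq_abs] using this
  exact (tendsto_zero_iff_abs_tendsto_zero f).mpr habs

/-- Asymptotic convergence of the DDWMR closed-loop tracking errors:
if `q̃′ = −k_q q̃ − C̄(θ)ᵀ ẽ` and `ẽ′ = C̄(θ) q̃ − k_e (0, ẽ₂, ẽ₃)` on `[0,∞)`,
with `k_q, k_e > 0`, then `ẽ(t) → 0` and `q̃(t) → 0` as `t → ∞`. -/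
theorem ddwmr_tracking_errors_tendsto_zero
    (d kq ke : ℝ) (hkq : 0 < kq) (hke : 0 < ke)
    (θ : ℝ → ℝ) (hθ : ContinuousOn θ (Set.Ici (0 : ℝ)))
    (qt : ℝ → (Fin 2 → ℝ)) (et : ℝ → (Fin 3 → ℝ))
    (hq : ∀ t, 0 ≤ t →
      HasDerivAt qt ((-kq) • qt t - (Cbar d (θ t))ᵀ.mulVec (et t)) t)
    (he : ∀ t, 0 ≤ t →
      HasDerivAt et ((Cbar d (θ t)).mulVec (qt t) - ke • ![(0 : ℝ), et t 1, et t 2]) t) :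
    Tendsto et atTop (nhds 0) ∧ Tendsto qt atTop (nhds 0) := by
  -- choose the small parameter ε and the decay rates μ, lam
  have h1kq : (0:ℝ) < 1 + kq^2 := by positivity
  have hd1 : (0:ℝ) < d^2 + 1 := by positivity
  set ε : ℝ := min 1 (min (kq/(1+kq^2)) (ke/(d^2+1))) with hεdef
  have hε0 : 0 < ε := lt_min one_pos (lt_min (by positivity) (by positivity))
  have hε1 : ε ≤ 1 := min_le_left _ _
  have hεkq : ε*(1+kq^2) ≤ kq := by
    have h : ε ≤ kq/(1+kq^2) := le_trans (min_le_right _ _) (min_le_left _ _)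
    rw [le_div_iff₀ h1kq] at h
    exact h
  have hεd : ε*d^2 ≤ ke := by
    have h : ε ≤ ke/(d^2+1) := le_trans (min_le_right _ _) (min_le_right _ _)
    rw [le_div_iff₀ hd1] at h
    nlinarith [hε0.le]
  set μ : ℝ := min kq (min ke (ε/4)) with hμdef
  have hμ0 : 0 < μ := lt_min hkq (lt_min hke (by positivity))
  have hμkq : μ ≤ kq := min_le_left _ _
  have hμke : μ ≤ ke := le_trans (min_le_right _ _) (min_le_left _ _)
  have hμε : μ ≤ ε/4 := le_trans (min_le_right _ _) (min_le_right _ _)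
  set lam : ℝ := 2*μ/3 with hlamdef
  have hlam : 0 < lam := by positivity
  -- the strict Lyapunov function
  set V : ℝ → ℝ := fun t => (qt t 0)^2 + (qt t 1)^2 + (et t 0)^2 + (et t 1)^2 + (et t 2)^2
      + ε*(qt t 1 * et t 0) with hVdef
  -- its derivative and the key differential inequality
  have hVder : ∀ t, 0 ≤ t → ∃ v, HasDerivAt V v t ∧ v ≤ -lam * V t := by
    intro t ht
    have hq' := hasDerivAt_pi.mp (hq t ht)
    have he' := hasDerivAt_pi.mp (he t ht)
    have hq0 : HasDerivAt (fun s => qt s 0)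
        (-kq*qt t 0 - (Real.cos (θ t)*et t 1 + Real.sin (θ t)*et t 2)) t := by
      have h := hq' 0
      have : ((-kq) • qt t - (Cbar d (θ t))ᵀ.mulVec (et t)) 0
          = -kq*qt t 0 - (Real.cos (θ t)*et t 1 + Real.sin (θ t)*et t 2) := by
        simp [Cbar, Matrix.mulVec, dotProduct, Fin.sum_univ_three, Matrix.transpose_apply,
          Matrix.vecHead, Matrix.vecTail]
        try ring
      rwa [this] at h
    have hq1 : HasDerivAt (fun s => qt s 1)
        (-kq*qt t 1 - (et t 0 + -(d*Real.sin (θ t))*et t 1 + d*Real.cos (θ t)*et t 2)) t := by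
      have h := hq' 1
      have : ((-kq) • qt t - (Cbar d (θ t))ᵀ.mulVec (et t)) 1
          = -kq*qt t 1 - (et t 0 + -(d*Real.sin (θ t))*et t 1 + d*Real.cos (θ t)*et t 2) := by
        simp [Cbar, Matrix.mulVec, dotProduct, Fin.sum_univ_three, Matrix.transpose_apply,
          Matrix.vecHead, Matrix.vecTail]
        try ring
      rwa [this] at h
    have he0 : HasDerivAt (fun s => et s 0) (qt t 1) t := by
      have h := he' 0
      have : ((Cbar d (θ t)).mulVec (qt t) - ke • ![(0 : ℝ), et t 1, et t 2]) 0 = qt t 1 := by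
        simp [Cbar, Matrix.mulVec, dotProduct, Fin.sum_univ_two, Matrix.vecHead, Matrix.vecTail]
        try ring
      rwa [this] at h
    have he1 : HasDerivAt (fun s => et s 1)
        (Real.cos (θ t)*qt t 0 + -(d*Real.sin (θ t))*qt t 1 - ke*et t 1) t := by
      have h := he' 1
      have : ((Cbar d (θ t)).mulVec (qt t) - ke • ![(0 : ℝ), et t 1, et t 2]) 1
          = Real.cos (θ t)*qt t 0 + -(d*Real.sin (θ t))*qt t 1 - ke*et t 1 := by
        simp [Cbar, Matrix.mulVec, dotProduct, Fin.sum_univ_two, Matrix.vecHead, Matrix.vecTail]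
        try ring
      rwa [this] at h
    have he2 : HasDerivAt (fun s => et s 2)
        (Real.sin (θ t)*qt t 0 + d*Real.cos (θ t)*qt t 1 - ke*et t 2) t := by
      have h := he' 2
      have : ((Cbar d (θ t)).mulVec (qt t) - ke • ![(0 : ℝ), et t 1, et t 2]) 2
          = Real.sin (θ t)*qt t 0 + d*Real.cos (θ t)*qt t 1 - ke*et t 2 := by
        simp [Cbar, Matrix.mulVec, dotProduct, Fin.sum_univ_two, Matrix.vecHead, Matrix.vecTail]
        try ring
      rwa [this] at h
    have hv : HasDerivAt V
        (2*qt t 0*(-kq*qt t 0 - (Real.cos (θ t)*et t 1 + Real.sin (θ t)*et t 2))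
         + 2*qt t 1*(-kq*qt t 1 - (et t 0 + -(d*Real.sin (θ t))*et t 1 + d*Real.cos (θ t)*et t 2))
         + 2*et t 0*(qt t 1)
         + 2*et t 1*(Real.cos (θ t)*qt t 0 + -(d*Real.sin (θ t))*qt t 1 - ke*et t 1)
         + 2*et t 2*(Real.sin (θ t)*qt t 0 + d*Real.cos (θ t)*qt t 1 - ke*et t 2)
         + ε*((-kq*qt t 1 - (et t 0 + -(d*Real.sin (θ t))*et t 1 + d*Real.cos (θ t)*et t 2))*et t 0
              + qt t 1*(qt t 1))) t := by
      have H := (((((hq0.pow 2).add (hq1.pow 2)).add (he0.pow 2)).add (he1.pow 2)).add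
        (he2.pow 2)).add ((hq1.mul he0).const_mul ε)
      refine H.congr_deriv ?_
      push_cast
      ring
    refine ⟨_, hv, ?_⟩
    have halg := ddwmr_key_alg kq ke d ε μ (Real.sin (θ t)) (Real.cos (θ t))
        (qt t 0) (qt t 1) (et t 0) (et t 1) (et t 2)
        hkq hke hε0 hε1 hεkq hεd hμkq hμke hμε hμ0 (Real.sin_sq_add_cos_sq (θ t))
    refine le_trans halg (le_of_eq ?_)
    show -(2*μ/3) * ((qt t 0)^2 + (qt t 1)^2 + (et t 0)^2 + (et t 1)^2 + (et t 2)^2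
        + ε*(qt t 1 * et t 0)) = -lam * V t
    rfl
  -- monotonicity of exp(lam t) * V t
  have hganti : AntitoneOn (fun t => Real.exp (lam*t) * V t) (Set.Ici (0:ℝ)) := by
    have hgder : ∀ t, 0 ≤ t → ∃ w, HasDerivAt (fun t => Real.exp (lam*t) * V t) w t ∧ w ≤ 0 := by
      intro t ht
      obtain ⟨v, hv, hvle⟩ := hVder t ht
      have hexp : HasDerivAt (fun t : ℝ => Real.exp (lam*t)) (Real.exp (lam*t)*lam) t := by
        simpa using (((hasDerivAt_id t).const_mul lam).exp)
      refine ⟨_, hexp.mul hv, ?_⟩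
      have hepos : 0 < Real.exp (lam*t) := Real.exp_pos _
      have : lam * V t + v ≤ 0 := by linarith
      nlinarith [hepos]
    apply antitoneOn_of_deriv_nonpos (convex_Ici 0)
    · intro t ht
      obtain ⟨w, hw, _⟩ := hgder t ht
      exact hw.continuousAt.continuousWithinAt
    · intro t ht
      rw [interior_Ici] at ht
      obtain ⟨w, hw, _⟩ := hgder t (le_of_lt ht)
      exact hw.differentiableAt.differentiableWithinAt
    · intro t ht
      rw [interior_Ici] at ht
      obtain ⟨w, hw, hw0⟩ := hgder t (le_of_lt ht)
      rw [hw.deriv]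
      exact hw0
  -- exponential decay of V
  have hVle : ∀ t, 0 ≤ t → V t ≤ V 0 * Real.exp (-(lam*t)) := by
    intro t ht
    have h2 : Real.exp (lam*t) * V t ≤ Real.exp (lam*0) * V 0 :=
      hganti Set.self_mem_Ici ht ht
    rw [mul_zero, Real.exp_zero, one_mul] at h2
    have h3 : V t = (Real.exp (lam*t) * V t) * Real.exp (-(lam*t)) := by
      rw [mul_comm (Real.exp (lam*t)) (V t), mul_assoc, ← Real.exp_add]
      simp
    rw [h3]
    exact mul_le_mul_of_nonneg_right h2 (Real.exp_nonneg _)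
  -- each squared component is bounded by 2 V
  have hcross := fun t => ddwmr_cross_bound ε (qt t 1) (et t 0) hε0.le hε1
  have hbound : ∀ t, 0 ≤ t → ∀ x, (x = qt t 0 ∨ x = qt t 1 ∨ x = et t 0 ∨ x = et t 1 ∨ x = et t 2) →
      x^2 ≤ (2*V 0) * Real.exp (-(lam*t)) := by
    intro t ht x hx
    have h1 := (hcross t).1
    have h2 : x^2 ≤ 2 * V t := by
      have hVt : V t = (qt t 0)^2 + (qt t 1)^2 + (et t 0)^2 + (et t 1)^2 + (et t 2)^2
          + ε*(qt t 1 * et t 0) := rfl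
      rw [hVt]
      rcases hx with h|h|h|h|h <;> rw [h] <;>
        linarith [h1, sq_nonneg (qt t 0), sq_nonneg (qt t 1), sq_nonneg (et t 0),
          sq_nonneg (et t 1), sq_nonneg (et t 2)]
    have h3 := hVle t ht
    linarith [h2, h3]
  constructor
  · rw [show (0 : Fin 3 → ℝ) = (fun _ => 0) from rfl, tendsto_pi_nhds]
    intro i
    fin_cases i
    · exact ddwmr_tendsto_of_sq_le_exp _ (2*V 0) lam hlam
        (fun t ht => hbound t ht (et t 0) (by tauto))
    · exact ddwmr_tendsto_of_sq_le_exp _ (2*V 0) lam hlam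
        (fun t ht => hbound t ht (et t 1) (by tauto))
    · exact ddwmr_tendsto_of_sq_le_exp _ (2*V 0) lam hlam
        (fun t ht => hbound t ht (et t 2) (by tauto))
  · rw [show (0 : Fin 2 → ℝ) = (fun _ => 0) from rfl, tendsto_pi_nhds]
    intro i
    fin_cases i
    · exact ddwmr_tendsto_of_sq_le_exp _ (2*V 0) lam hlam
        (fun t ht => hbound t ht (qt t 0) (by tauto))
    · exact ddwmr_tendsto_of_sq_le_exp _ (2*V 0) lam hlam
        (fun t ht => hbound t ht (qt t 1) (by tauto))
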